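/- Fix n ≥ 1, N ≥ 1, Δ > 0, L = log(2HSAT/δ) > 0, and suppose n < L/(2Δ²). Define ε(λ) = sqrt(L(λ²/(2n) + (1−λ)²/(2N))) + Δ(1−λ). Then the derivative of ε at λ = 1 is strictly positive: ε'(1) = sqrt(L/(2n)) − Δ > 0, and consequently min_{λ∈[0,1]} ε(λ) < ε(1) = sqrt(L/(2n)); i.e., the data-pooling confidence radius is strictly smaller than the Hoeffding radius ε_R^H(n) = sqrt(L/(2n)). -/

import Mathlib

/-- When `n < L/(2Δ²)`, the derivative of the data-pooling radius
`ε(λ) = sqrt(L(λ²/(2n)+(1−λ)²/(2N))) + Δ(1−λ)` at `λ = 1` is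
`sqrt(L/(2n)) − Δ > 0`; consequently the minimum of `ε` over `[0,1]` is
strictly smaller than `ε(1) = sqrt(L/(2n))` (the Hoeffding radius). -/
theorem stmt_9 (n N : ℕ) (hn : 1 ≤ n) (hN : 1 ≤ N) (Δ L : ℝ) (hΔ : 0 < Δ) (hL : 0 < L)
    (hsmall : (n : ℝ) < L / (2 * Δ ^ 2)) :
    letI ε : ℝ → ℝ := fun l =>
      Real.sqrt (L * (l ^ 2 / (2 * n) + (1 - l) ^ 2 / (2 * N))) + Δ * (1 - l)
    HasDerivAt ε (Real.sqrt (L / (2 * n)) - Δ) 1 ∧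
    0 < Real.sqrt (L / (2 * n)) - Δ ∧
    ε 1 = Real.sqrt (L / (2 * n)) ∧
    (∃ l ∈ Set.Icc (0 : ℝ) 1, ε l < ε 1) := by
  set ε : ℝ → ℝ := fun l =>
      Real.sqrt (L * (l ^ 2 / (2 * n) + (1 - l) ^ 2 / (2 * N))) + Δ * (1 - l) with hε_def
  have hn0 : (0:ℝ) < (n:ℝ) := by exact_mod_cast hn
  have hN0 : (0:ℝ) < (N:ℝ) := by exact_mod_cast hN
  have hpos : 0 < L / (2 * n) := by positivity
  have hsq : Real.sqrt (L / (2 * n)) ^ 2 = L / (2 * n) := Real.sq_sqrt hpos.le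
  have hsqrt_pos : 0 < Real.sqrt (L / (2 * n)) := Real.sqrt_pos.2 hpos
  -- inner function
  set g : ℝ → ℝ := fun l => L * (l ^ 2 / (2 * n) + (1 - l) ^ 2 / (2 * N)) with hg_def
  have hg1 : g 1 = L / (2 * n) := by
    simp only [hg_def]
    norm_num
    ring
  have hgd : HasDerivAt g (L / n) 1 := by
    have h1 : HasDerivAt (fun l : ℝ => l ^ 2) 2 1 := by
      simpa using hasDerivAt_pow 2 (1:ℝ)
    have h2 : HasDerivAt (fun l : ℝ => (1 - l) ^ 2) 0 1 := by
      have := ((hasDerivAt_id (1:ℝ)).const_sub 1).fun_pow 2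
      simpa using this
    have := ((h1.div_const (2 * n)).add (h2.div_const (2 * N))).const_mul L
    refine this.congr_deriv ?_
    field_simp
    ring
  have hderiv : HasDerivAt ε (Real.sqrt (L / (2 * n)) - Δ) 1 := by
    have hsd : HasDerivAt Real.sqrt (1 / (2 * Real.sqrt (g 1))) (g 1) :=
      Real.hasDerivAt_sqrt (by rw [hg1]; exact hpos.ne')
    have hcomp : HasDerivAt (fun l => Real.sqrt (g l))
        (1 / (2 * Real.sqrt (g 1)) * (L / n)) 1 := hsd.comp 1 hgd
    have hlin : HasDerivAt (fun l : ℝ => Δ * (1 - l)) (-Δ) 1 := by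
      have := ((hasDerivAt_id (1:ℝ)).const_sub 1).const_mul Δ
      simpa using this
    have hsum := hcomp.add hlin
    have h2 : Real.sqrt (L/(2*n)) * (2*Real.sqrt (L/(2*n))) = L/n := by
      rw [show Real.sqrt (L/(2*n)) * (2*Real.sqrt (L/(2*n)))
          = 2*(Real.sqrt (L/(2*n)))^2 by ring, hsq]
      field_simp
    have hne2 : (2*Real.sqrt (L/(2*n))) ≠ 0 := by positivity
    have key : 1/(2*Real.sqrt (L/(2*n))) * (L/n) = Real.sqrt (L/(2*n)) := by
      rw [one_div, inv_mul_eq_div, div_eq_iff hne2]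
      exact h2.symm
    refine hsum.congr_deriv ?_
    rw [hg1, key]
    ring
  have hΔlt : Δ < Real.sqrt (L / (2 * n)) := by
    have : Δ ^ 2 < L / (2 * n) := by
      have h' : (n:ℝ) * (2*Δ^2) < L := (lt_div_iff₀ (by positivity)).1 hsmall
      rw [lt_div_iff₀ (by positivity)]
      nlinarith
    calc Δ = Real.sqrt (Δ ^ 2) := by rw [Real.sqrt_sq hΔ.le]
      _ < Real.sqrt (L / (2 * n)) := Real.sqrt_lt_sqrt (by positivity) this
  have hpos' : 0 < Real.sqrt (L / (2 * n)) - Δ := sub_pos.2 hΔlt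
  have hε1 : ε 1 = Real.sqrt (L / (2 * n)) := by
    simp only [hε_def]
    rw [show L * ((1:ℝ) ^ 2 / (2 * n) + (1 - 1) ^ 2 / (2 * N)) = L / (2 * n) by field_simp; ring]
    ring
  refine ⟨hderiv, hpos', hε1, ?_⟩
  -- existence of l < 1 with ε l < ε 1
  have hslope := hasDerivAt_iff_tendsto_slope.1 hderiv
  have hslope' : Filter.Tendsto (slope ε 1) (nhdsWithin 1 (Set.Iio 1))
      (nhds (Real.sqrt (L / (2 * n)) - Δ)) :=
    hslope.mono_left (nhdsWithin_mono _ (fun x hx => ne_of_lt hx))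
  have hev : ∀ᶠ l in nhdsWithin 1 (Set.Iio 1), 0 < slope ε 1 l :=
    hslope'.eventually (eventually_gt_nhds hpos')
  have hev2 : ∀ᶠ l in nhdsWithin 1 (Set.Iio 1), l ∈ Set.Ioo (0:ℝ) 1 :=
    Ioo_mem_nhdsLT_of_mem (by constructor <;> norm_num)
  obtain ⟨l, hl1, hl2⟩ := ((hev.and hev2).exists)
  refine ⟨l, ⟨hl2.1.le, hl2.2.le⟩, ?_⟩
  have hlt : l - 1 < 0 := by linarith [hl2.2]
  rw [slope_def_field] at hl1
  by_contra h
  push_neg at h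
  have : (ε l - ε 1) / (l - 1) ≤ 0 := div_nonpos_of_nonneg_of_nonpos (by linarith) hlt.le
  linarith
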